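/- Let k ≥ 2 and q ≥ 3 be integers. Then for all integers n ≥ k+2, F^{(k)}_{q,n} = U_{q,n} − Σ_{j=1}^{n−k−1} V_{q,j}·F^{(k)}_{q,n−k−j}. -/

import Mathlib

/-- For integers `k ≥ 2` and `q ≥ 3` and all integers `n ≥ k+2`,
`F n = U n − ∑_{j=1}^{n-k-1} V j · F (n-k-j)`. -/
theorem qk_fib_eq_U_sub_sum
    (q : ℤ) (k : ℕ) (hq : 3 ≤ q) (hk : 2 ≤ k)
    (F : ℤ → ℝ)
    (hF0 : ∀ n : ℤ, 2 - (k : ℤ) ≤ n → n ≤ 0 → F n = 0)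
    (hF1 : F 1 = 1)
    (hFrec : ∀ n : ℤ, 2 ≤ n →
      F n = (q : ℝ) * F (n - 1) + ∑ i ∈ Finset.Icc 2 k, F (n - (i : ℤ)))
    (U : ℤ → ℝ)
    (hU1 : U 1 = 1)
    (hU2 : U 2 = (q : ℝ))
    (hUrec : ∀ n : ℤ, 3 ≤ n → U n = ((q : ℝ) + 1) * U (n - 1) - ((q : ℝ) - 1) * U (n - 2))
    (V : ℤ → ℝ)
    (hV1 : V 1 = 1)
    (hV2 : V 2 = (q : ℝ) + 1)
    (hVrec : ∀ n : ℤ, 3 ≤ n → V n = ((q : ℝ) + 1) * V (n - 1) - ((q : ℝ) - 1) * V (n - 2)) :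
    ∀ n : ℤ, (k : ℤ) + 2 ≤ n →
      F n = U n - ∑ j ∈ Finset.Icc (1 : ℤ) (n - (k : ℤ) - 1), V j * F (n - (k : ℤ) - j) := by
  have hk' : (2 : ℤ) ≤ (k : ℤ) := by exact_mod_cast hk
  -- convert ℕ-indexed sums to ℤ-indexed sums
  have natToInt : ∀ (a b : ℕ) (f : ℤ → ℝ),
      ∑ i ∈ Finset.Icc a b, f (i : ℤ) = ∑ j ∈ Finset.Icc (a : ℤ) (b : ℤ), f j := by
    intro a b f
    refine Finset.sum_nbij' (fun n => (n : ℤ)) (fun n => n.toNat) ?_ ?_ ?_ ?_ ?_ <;>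
      intros x hx <;> simp_all [Finset.mem_Icc] <;> omega
  -- index shifting
  have shift : ∀ (a b c : ℤ) (f : ℤ → ℝ),
      ∑ j ∈ Finset.Icc (a + c) (b + c), f j = ∑ j ∈ Finset.Icc a b, f (j + c) := by
    intro a b c f
    rw [← Finset.map_add_right_Icc, Finset.sum_map]
    simp [addRightEmbedding]
  -- peel off bottom element
  have insb : ∀ (a b : ℤ) (f : ℤ → ℝ), a ≤ b →
      ∑ j ∈ Finset.Icc a b, f j = f a + ∑ j ∈ Finset.Icc (a + 1) b, f j := by
    intro a b f hab
    rw [show Finset.Icc a b = insert a (Finset.Icc (a + 1) b) from by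
        ext x; simp only [Finset.mem_Icc, Finset.mem_insert]; omega,
      Finset.sum_insert (by simp only [Finset.mem_Icc]; omega)]
  -- peel off top element
  have inst : ∀ (a b : ℤ) (f : ℤ → ℝ), a ≤ b →
      ∑ j ∈ Finset.Icc a b, f j = (∑ j ∈ Finset.Icc a (b - 1), f j) + f b := by
    intro a b f hab
    rw [show Finset.Icc a b = insert b (Finset.Icc a (b - 1)) from by
        ext x; simp only [Finset.mem_Icc, Finset.mem_insert]; omega,
      Finset.sum_insert (by simp only [Finset.mem_Icc]; omega)]
    ring
  -- the three-term recurrence for F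
  have threeF : ∀ m : ℤ, 3 ≤ m →
      F m = ((q : ℝ) + 1) * F (m - 1) - ((q : ℝ) - 1) * F (m - 2) - F (m - (k : ℤ) - 1) := by
    intro m hm
    have h1 := hFrec m (by linarith)
    have h2 := hFrec (m - 1) (by linarith)
    have e1 : ∑ i ∈ Finset.Icc 2 k, F (m - (i : ℤ))
        = ∑ j ∈ Finset.Icc (2 : ℤ) (k : ℤ), F (m - j) := by
      simpa using natToInt 2 k (fun j => F (m - j))
    have e2 : ∑ i ∈ Finset.Icc 2 k, F (m - 1 - (i : ℤ))
        = ∑ j ∈ Finset.Icc (2 : ℤ) (k : ℤ), F (m - 1 - j) := by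
      simpa using natToInt 2 k (fun j => F (m - 1 - j))
    have e3 : ∑ j ∈ Finset.Icc (3 : ℤ) ((k : ℤ) + 1), F (m - j)
        = ∑ j ∈ Finset.Icc (2 : ℤ) (k : ℤ), F (m - 1 - j) := by
      rw [show (3 : ℤ) = 2 + 1 by norm_num, shift 2 (k : ℤ) 1 (fun j => F (m - j))]
      exact Finset.sum_congr rfl fun j _ => by rw [show m - (j + 1) = m - 1 - j by ring]
    have e4 : ∑ j ∈ Finset.Icc (3 : ℤ) ((k : ℤ) + 1), F (m - j)
        = (∑ j ∈ Finset.Icc (3 : ℤ) (k : ℤ), F (m - j)) + F (m - ((k : ℤ) + 1)) := by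
      rw [inst 3 ((k : ℤ) + 1) (fun j => F (m - j)) (by linarith),
        show (k : ℤ) + 1 - 1 = (k : ℤ) by ring]
    have e5 : ∑ j ∈ Finset.Icc (2 : ℤ) (k : ℤ), F (m - j)
        = F (m - 2) + ∑ j ∈ Finset.Icc (3 : ℤ) (k : ℤ), F (m - j) := by
      rw [insb 2 (k : ℤ) (fun j => F (m - j)) (by linarith),
        show (2 : ℤ) + 1 = 3 by norm_num]
    rw [e1] at h1
    rw [e2, ← e3, e4] at h2
    rw [e5] at h1
    rw [show m - ((k : ℤ) + 1) = m - (k : ℤ) - 1 by ring,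
      show m - 1 - 1 = m - 2 by ring] at h2
    linarith
  have hF2 : F 2 = (q : ℝ) := by
    have h := hFrec 2 le_rfl
    have hz : ∀ i ∈ Finset.Icc 2 k, F (2 - (i : ℤ)) = 0 := by
      intro i hi
      simp only [Finset.mem_Icc] at hi
      apply hF0 <;> push_cast <;> omega
    rw [Finset.sum_eq_zero hz] at h
    rw [h, show (2 : ℤ) - 1 = 1 by ring, hF1]; ring
  -- F agrees with U on [1, k+1]
  have hFU2 : ∀ m : ℤ, 2 ≤ m → (m ≤ (k : ℤ) + 1 → F m = U m ∧ F (m - 1) = U (m - 1)) := by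
    refine fun m hm => Int.le_induction
      (motive := fun m _ => m ≤ (k : ℤ) + 1 → F m = U m ∧ F (m - 1) = U (m - 1)) ?_ ?_ m hm
    · intro _
      refine ⟨by rw [hF2, hU2], ?_⟩
      rw [show (2 : ℤ) - 1 = 1 by ring, hF1, hU1]
    · intro n hn ih hle
      obtain ⟨e1, e2⟩ := ih (by linarith)
      have h3 := threeF (n + 1) (by linarith)
      have hz : F (n + 1 - (k : ℤ) - 1) = 0 := hF0 _ (by omega) (by omega)
      have hU := hUrec (n + 1) (by linarith)
      rw [show n + 1 - 1 = n by ring, show n + 1 - 2 = n - 1 by ring] at h3 hU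
      constructor
      · rw [h3, hz, e1, e2, hU]; ring
      · rw [show n + 1 - 1 = n by ring]; exact e1
  have hFU : ∀ m : ℤ, 1 ≤ m → m ≤ (k : ℤ) + 1 → F m = U m := by
    intro m h1 h2
    rcases eq_or_lt_of_le h1 with h | h
    · rw [← h, hF1, hU1]
    · exact (hFU2 m (by omega) h2).1
  -- base case n = k+2
  have base1' : F ((k : ℤ) + 2) = U ((k : ℤ) + 2) - 1 := by
    have h3 := threeF ((k : ℤ) + 2) (by linarith)
    have hU := hUrec ((k : ℤ) + 2) (by linarith)
    rw [show (k : ℤ) + 2 - 1 = (k : ℤ) + 1 by ring, show (k : ℤ) + 2 - 2 = (k : ℤ) by ring] at h3 hU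
    rw [show (k : ℤ) + 2 - (k : ℤ) - 1 = 1 by ring, hF1,
      hFU ((k : ℤ) + 1) (by linarith) (by linarith),
      hFU (k : ℤ) (by linarith) (by linarith)] at h3
    linarith [h3, hU]
  have base1 : F ((k : ℤ) + 2)
      = U ((k : ℤ) + 2) - ∑ j ∈ Finset.Icc (1 : ℤ) ((k : ℤ) + 2 - (k : ℤ) - 1),
          V j * F ((k : ℤ) + 2 - (k : ℤ) - j) := by
    rw [show (k : ℤ) + 2 - (k : ℤ) - 1 = 1 by ring, Finset.Icc_self, Finset.sum_singleton,
      show (k : ℤ) + 2 - (k : ℤ) - 1 = 1 by ring, hF1, hV1]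
    rw [base1']; ring
  -- base case n = k+3
  have base2 : F ((k : ℤ) + 3)
      = U ((k : ℤ) + 3) - ∑ j ∈ Finset.Icc (1 : ℤ) ((k : ℤ) + 3 - (k : ℤ) - 1),
          V j * F ((k : ℤ) + 3 - (k : ℤ) - j) := by
    have h3 := threeF ((k : ℤ) + 3) (by linarith)
    have hU := hUrec ((k : ℤ) + 3) (by linarith)
    rw [show (k : ℤ) + 3 - 1 = (k : ℤ) + 2 by ring, show (k : ℤ) + 3 - 2 = (k : ℤ) + 1 by ring]
      at h3 hU
    rw [show (k : ℤ) + 3 - (k : ℤ) - 1 = 2 by ring, hF2,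
      hFU ((k : ℤ) + 1) (by linarith) (by linarith), base1'] at h3
    rw [show (k : ℤ) + 3 - (k : ℤ) - 1 = 2 by ring, insb 1 2 _ (by norm_num),
      show (1 : ℤ) + 1 = 2 by norm_num, Finset.Icc_self, Finset.sum_singleton,
      show (k : ℤ) + 3 - (k : ℤ) - 1 = 2 by ring,
      show (k : ℤ) + 3 - (k : ℤ) - 2 = 1 by ring, hF1, hF2, hV1, hV2]
    rw [h3, hU]; ring
  -- the key reindexing identity for the sum
  have core : ∀ N : ℤ, 4 ≤ N →
      ∑ j ∈ Finset.Icc (1 : ℤ) (N - 1), V j * F (N - j)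
        = ((q : ℝ) + 1) * (∑ j ∈ Finset.Icc (1 : ℤ) (N - 2), V j * F (N - 1 - j))
          - ((q : ℝ) - 1) * (∑ j ∈ Finset.Icc (1 : ℤ) (N - 3), V j * F (N - 2 - j))
          + F (N - 1) := by
    intro N hN
    have peel : ∑ j ∈ Finset.Icc (1 : ℤ) (N - 1), V j * F (N - j)
        = V 1 * F (N - 1) + V 2 * F (N - 2)
          + ∑ j ∈ Finset.Icc (3 : ℤ) (N - 1), V j * F (N - j) := by
      rw [insb 1 (N - 1) _ (by linarith), show (1 : ℤ) + 1 = 2 by norm_num,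
        insb 2 (N - 1) _ (by linarith), show (2 : ℤ) + 1 = 3 by norm_num]
      ring
    have step1 : ∑ j ∈ Finset.Icc (3 : ℤ) (N - 1), V j * F (N - j)
        = ∑ j ∈ Finset.Icc (3 : ℤ) (N - 1),
            (((q : ℝ) + 1) * (V (j - 1) * F (N - j)) - ((q : ℝ) - 1) * (V (j - 2) * F (N - j))) := by
      refine Finset.sum_congr rfl fun j hj => ?_
      simp only [Finset.mem_Icc] at hj
      rw [hVrec j (by omega)]
      ring
    rw [step1, Finset.sum_sub_distrib, ← Finset.mul_sum, ← Finset.mul_sum] at peel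
    have shA : ∑ j ∈ Finset.Icc (3 : ℤ) (N - 1), V (j - 1) * F (N - j)
        = ∑ j ∈ Finset.Icc (2 : ℤ) (N - 2), V j * F (N - 1 - j) := by
      have h := shift 2 (N - 2) 1 (fun j => V (j - 1) * F (N - j))
      beta_reduce at h
      rw [show (2 : ℤ) + 1 = 3 by norm_num, show N - 2 + 1 = N - 1 by ring] at h
      rw [h]
      exact Finset.sum_congr rfl fun j _ => by
        rw [show j + 1 - 1 = j by ring, show N - (j + 1) = N - 1 - j by ring]
    have shB : ∑ j ∈ Finset.Icc (3 : ℤ) (N - 1), V (j - 2) * F (N - j)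
        = ∑ j ∈ Finset.Icc (1 : ℤ) (N - 3), V j * F (N - 2 - j) := by
      have h := shift 1 (N - 3) 2 (fun j => V (j - 2) * F (N - j))
      beta_reduce at h
      rw [show (1 : ℤ) + 2 = 3 by norm_num, show N - 3 + 2 = N - 1 by ring] at h
      rw [h]
      exact Finset.sum_congr rfl fun j _ => by
        rw [show j + 2 - 2 = j by ring, show N - (j + 2) = N - 2 - j by ring]
    have peelA : ∑ j ∈ Finset.Icc (1 : ℤ) (N - 2), V j * F (N - 1 - j)
        = V 1 * F (N - 1 - 1) + ∑ j ∈ Finset.Icc (2 : ℤ) (N - 2), V j * F (N - 1 - j) := by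
      rw [insb 1 (N - 2) _ (by linarith), show (1 : ℤ) + 1 = 2 by norm_num]
    rw [shA, shB] at peel
    rw [peel, peelA, hV1, hV2, show N - 1 - 1 = N - 2 by ring]
    ring
  -- main two-step induction
  have main : ∀ m : ℤ, (k : ℤ) + 3 ≤ m →
      (F m = U m - ∑ j ∈ Finset.Icc (1 : ℤ) (m - (k : ℤ) - 1), V j * F (m - (k : ℤ) - j))
      ∧ (F (m - 1) = U (m - 1)
          - ∑ j ∈ Finset.Icc (1 : ℤ) (m - 1 - (k : ℤ) - 1), V j * F (m - 1 - (k : ℤ) - j)) := by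
    refine fun m hm => Int.le_induction
      (motive := fun m _ => (F m = U m - ∑ j ∈ Finset.Icc (1 : ℤ) (m - (k : ℤ) - 1),
            V j * F (m - (k : ℤ) - j))
        ∧ (F (m - 1) = U (m - 1)
            - ∑ j ∈ Finset.Icc (1 : ℤ) (m - 1 - (k : ℤ) - 1), V j * F (m - 1 - (k : ℤ) - j)))
      ?_ ?_ m hm
    · constructor
      · exact base2
      · rw [show (k : ℤ) + 3 - 1 = (k : ℤ) + 2 by ring]; exact base1
    · intro n hn ih
      obtain ⟨ih1, ih2⟩ := ih
      refine ⟨?_, by rw [show n + 1 - 1 = n by ring]; exact ih1⟩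
      have h3 := threeF (n + 1) (by linarith)
      have hU := hUrec (n + 1) (by linarith)
      rw [show n + 1 - 1 = n by ring, show n + 1 - 2 = n - 1 by ring] at h3 hU
      have hc := core (n + 1 - (k : ℤ)) (by linarith)
      have conv1 : ∑ j ∈ Finset.Icc (1 : ℤ) (n + 1 - (k : ℤ) - 2), V j * F (n + 1 - (k : ℤ) - 1 - j)
          = ∑ j ∈ Finset.Icc (1 : ℤ) (n - (k : ℤ) - 1), V j * F (n - (k : ℤ) - j) := by
        rw [show n + 1 - (k : ℤ) - 2 = n - (k : ℤ) - 1 by ring]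
        exact Finset.sum_congr rfl fun j _ => by
          rw [show n + 1 - (k : ℤ) - 1 - j = n - (k : ℤ) - j by ring]
      have conv2 : ∑ j ∈ Finset.Icc (1 : ℤ) (n + 1 - (k : ℤ) - 3), V j * F (n + 1 - (k : ℤ) - 2 - j)
          = ∑ j ∈ Finset.Icc (1 : ℤ) (n - 1 - (k : ℤ) - 1), V j * F (n - 1 - (k : ℤ) - j) := by
        rw [show n + 1 - (k : ℤ) - 3 = n - 1 - (k : ℤ) - 1 by ring]
        exact Finset.sum_congr rfl fun j _ => by
          rw [show n + 1 - (k : ℤ) - 2 - j = n - 1 - (k : ℤ) - j by ring]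
      rw [conv1, conv2] at hc
      -- align the sum in hc with the goal's sum
      have hc' : ∑ j ∈ Finset.Icc (1 : ℤ) (n + 1 - (k : ℤ) - 1), V j * F (n + 1 - (k : ℤ) - j)
          = ((q : ℝ) + 1) * (∑ j ∈ Finset.Icc (1 : ℤ) (n - (k : ℤ) - 1), V j * F (n - (k : ℤ) - j))
            - ((q : ℝ) - 1) * (∑ j ∈ Finset.Icc (1 : ℤ) (n - 1 - (k : ℤ) - 1),
                V j * F (n - 1 - (k : ℤ) - j))
            + F (n + 1 - (k : ℤ) - 1) := by
        rw [← hc]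
      linear_combination h3 + hc' - hU + ((q : ℝ) + 1) * ih1 - ((q : ℝ) - 1) * ih2
  intro n hn
  rcases eq_or_lt_of_le hn with h | h
  · rw [← h]; exact base1
  · exact (main n (by omega)).1
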